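/- The automaton group of automaton 887 is non-contracting: bc satisfies bc(00) = 00, (bc)|_{00} = bc, and bc has infinite order. -/

import Mathlib

namespace Stmt14


/-- A Mealy automaton over the binary alphabet with state set `S`. -/
structure Mealy (S : Type) where
  /-- transition function -/
  δ : S → Bool → S
  /-- output function -/
  τ : S → Bool → Bool

namespace Mealy

variable {S : Type} (M : Mealy S)

/-- The state reached from `q` after reading the first `n` letters of `w`. -/
def stateAt (q : S) (w : ℕ → Bool) : ℕ → S
  | 0 => q
  | n + 1 => M.δ (stateAt q w n) (w n)

/-- The action of state `q` on infinite words. -/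
def act (q : S) (w : ℕ → Bool) : ℕ → Bool :=
  fun n => M.τ (M.stateAt q w n) (w n)

/-- The inverse automaton (for automata whose output functions are involutions). -/
def inv : Mealy S := ⟨fun q b => M.δ q (M.τ q b), M.τ⟩

theorem stateAt_inv_act (h : ∀ q b, M.τ q (M.τ q b) = b) (q : S) (w : ℕ → Bool) :
    ∀ n, M.inv.stateAt q (M.act q w) n = M.stateAt q w n := by
  intro n
  induction n with
  | zero => rfl
  | succ n ih =>
    show M.inv.δ (M.inv.stateAt q (M.act q w) n) (M.act q w n) = M.δ (M.stateAt q w n) (w n)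
    rw [ih]
    show M.δ (M.stateAt q w n) (M.τ (M.stateAt q w n) (M.τ (M.stateAt q w n) (w n))) = _
    rw [h]

theorem inv_act (h : ∀ q b, M.τ q (M.τ q b) = b) (q : S) (w : ℕ → Bool) :
    M.inv.act q (M.act q w) = w := by
  funext n
  show M.inv.τ (M.inv.stateAt q (M.act q w) n) (M.act q w n) = w n
  rw [stateAt_inv_act M h]
  show M.τ (M.stateAt q w n) (M.τ (M.stateAt q w n) (w n)) = w n
  rw [h]

theorem inv_inv (h : ∀ q b, M.τ q (M.τ q b) = b) : M.inv.inv = M := by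
  obtain ⟨d, t⟩ := M
  simp only [inv]
  congr 1
  funext q b
  exact congrArg (d q) (h q b)

/-- The permutation of the set of infinite binary words defined by state `q`. -/
def perm (h : ∀ q b, M.τ q (M.τ q b) = b) (q : S) : Equiv.Perm (ℕ → Bool) where
  toFun := M.act q
  invFun := M.inv.act q
  left_inv := fun w => M.inv_act h q w
  right_inv := fun w => by
    have h2 : ∀ q b, M.inv.τ q (M.inv.τ q b) = b := h
    have := M.inv.inv_act h2 q w
    rwa [M.inv_inv h] at this

end Mealy

/-- Prepend a finite word to an infinite word. -/
def cat (u : List Bool) (w : ℕ → Bool) : ℕ → Bool :=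
  fun n => u.getD n (w (n - u.length))

/-- The (semantic) restriction of a transformation of infinite words to the
subtree indexed by the finite word `u`. -/
def resW (f : (ℕ → Bool) → ℕ → Bool) (u : List Bool) : (ℕ → Bool) → ℕ → Bool :=
  fun w n => f (cat u w) (n + u.length)

/-- The periodic infinite word with period `u`. -/
def per (u : List Bool) : ℕ → Bool := fun n => u.getD (n % u.length) false

/-- Left-shift equivalence of infinite words: they share a common infinite tail. -/
def seq (u v : ℕ → Bool) : Prop := ∃ k l : ℕ, ∀ n, u (n + k) = v (n + l)

inductive St : Type
  | a | b | c
deriving DecidableEq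

instance instFintypeSt : Fintype St :=
  Fintype.ofList [St.a, St.b, St.c] (by intro x; cases x <;> simp)

/-- Automaton 887. -/
def M : Mealy St where
  δ := fun q x => match q, x with
    | .a, false => .b | .a, true => .b
    | .b, false => .c | .b, true => .c
    | .c, false => .b | .c, true => .a
  τ := fun q x => match q with
    | .a => !x
    | .b => x
    | .c => x

theorem M_inv : ∀ q x, M.τ q (M.τ q x) = x := by decide

/-- The automorphism of the binary tree boundary defined by state `a`. -/
def a : Equiv.Perm (ℕ → Bool) := M.perm M_inv .a

/-- The automorphism of the binary tree boundary defined by state `b`. -/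
def b : Equiv.Perm (ℕ → Bool) := M.perm M_inv .b

/-- The automorphism of the binary tree boundary defined by state `c`. -/
def c : Equiv.Perm (ℕ → Bool) := M.perm M_inv .c


/-! ### Auxiliary material for the proof -/

private lemma testBit_succ_eq (n j : ℕ) :
    Nat.testBit (n+1) j = if (n+1) % 2^j = 0 then !Nat.testBit n j else Nat.testBit n j := by
  have hd : (n+1) / 2^j = n / 2^j + if 2^j ∣ n+1 then 1 else 0 := Nat.succ_div (a := n) (b := 2^j)
  rw [Nat.testBit_eq_decide_div_mod_eq, Nat.testBit_eq_decide_div_mod_eq]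
  split_ifs with h
  · rw [hd, if_pos (Nat.dvd_of_mod_eq_zero h)]
    rcases Nat.mod_two_eq_zero_or_one (n / 2^j) with h3 | h3 <;>
      simp [Nat.add_mod, h3]
  · rw [hd, if_neg (by rwa [Nat.dvd_iff_mod_eq_zero])]; simp

private lemma mod_pow_succ (n i : ℕ) :
    (n+1) % 2^(i+1) = 0 ↔ ((n+1) % 2^i = 0 ∧ Nat.testBit n i = true) := by
  have hp : 0 < 2^i := Nat.pow_pos (by norm_num)
  have hmm : (n+1) % (2^i * 2) = (n+1) % 2^i + 2^i * ((n+1) / 2^i % 2) := Nat.mod_mul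
  have hd : (n+1) / 2^i = n / 2^i + if 2^i ∣ n+1 then 1 else 0 := Nat.succ_div (a := n) (b := 2^i)
  rw [pow_succ, hmm, Nat.testBit_eq_decide_div_mod_eq]
  rcases Nat.mod_two_eq_zero_or_one ((n+1) / 2^i) with ht | ht <;> rw [ht]
  · constructor
    · intro h
      have h1 : (n+1) % 2^i = 0 := by omega
      rw [if_pos (Nat.dvd_of_mod_eq_zero h1)] at hd
      refine ⟨h1, by simp; omega⟩
    · rintro ⟨h1, _⟩
      omega
  · constructor
    · intro h; omega
    · rintro ⟨h1, h2⟩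
      simp only [decide_eq_true_eq] at h2
      rw [if_pos (Nat.dvd_of_mod_eq_zero h1)] at hd
      omega

/-- The word encoding the binary digits of `n`. -/
def Wd (n : ℕ) : ℕ → Bool := fun m =>
  if m % 3 = 0 then true
  else if m % 3 = 1 then !(n.testBit (m / 3))
  else !(n.testBit (m / 3 + 1))

/-- The image of `Wd n` under the action of state `c`. -/
def Yd (n : ℕ) : ℕ → Bool := fun m =>
  if m % 3 = 0 then true
  else if m % 3 = 1 then n.testBit (m / 3)
  else !(n.testBit (m / 3 + 1))

private lemma cState (n : ℕ) : ∀ m, M.stateAt .c (Wd n) m =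
    (if m % 3 = 0 then St.c else if m % 3 = 1 then St.a else St.b) := by
  intro m
  induction m with
  | zero => rfl
  | succ m ih =>
    have hst : M.stateAt .c (Wd n) (m+1) = M.δ (M.stateAt .c (Wd n) m) (Wd n m) := rfl
    rw [hst, ih]
    rcases (by omega : m % 3 = 0 ∨ m % 3 = 1 ∨ m % 3 = 2) with h | h | h
    · have h1 : (m+1) % 3 = 1 := by omega
      simp [Wd, h, h1, M]
    · have h1 : (m+1) % 3 = 2 := by omega
      simp only [Wd, h, h1]
      norm_num
      cases hb9 : n.testBit (m / 3) <;> rfl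
    · have h1 : (m+1) % 3 = 0 := by omega
      simp only [Wd, h, h1]
      norm_num
      cases hb9 : n.testBit (m / 3 + 1) <;> rfl

private lemma actC (n : ℕ) : M.act .c (Wd n) = Yd n := by
  funext m
  show M.τ (M.stateAt .c (Wd n) m) (Wd n m) = Yd n m
  rw [cState]
  rcases (by omega : m % 3 = 0 ∨ m % 3 = 1 ∨ m % 3 = 2) with h | h | h <;>
      simp only [Wd, Yd, h] <;> norm_num
  · rfl
  · cases hb9 : n.testBit (m / 3) <;> rfl
  · cases hb9 : n.testBit (m / 3 + 1) <;> rfl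

/-- The state of the `b`-machine at the start of block `i` when processing `Yd n`. -/
def Tst (n i : ℕ) : St := if (n+1) % 2^i = 0 then .b else .c

private lemma Yd0 (n i : ℕ) : Yd n (3*i) = true := by
  simp [Yd, Nat.mul_mod_right]

private lemma Yd1 (n i : ℕ) : Yd n (3*i+1) = n.testBit i := by
  have h1 : (3*i+1) % 3 = 1 := by omega
  have h2 : (3*i+1) / 3 = i := by omega
  simp [Yd, h1, h2]

private lemma Yd2 (n i : ℕ) : Yd n (3*i+2) = !(n.testBit (i+1)) := by
  have h1 : (3*i+2) % 3 = 2 := by omega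
  have h2 : (3*i+2) / 3 = i := by omega
  simp [Yd, h1, h2]

private lemma bState (n : ℕ) : ∀ i, M.stateAt .b (Yd n) (3*i) = Tst n i := by
  intro i
  induction i with
  | zero => simp [Tst, Nat.mod_one]; rfl
  | succ i ih =>
    have h3 : 3*(i+1) = 3*i+1+1+1 := by ring
    rw [h3]
    show M.δ (M.δ (M.δ (M.stateAt .b (Yd n) (3*i)) (Yd n (3*i))) (Yd n (3*i+1)))
        (Yd n (3*i+1+1)) = Tst n (i+1)
    have h4 : 3*i+1+1 = 3*i+2 := by ring
    rw [ih, Yd0, Yd1, h4, Yd2]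
    by_cases h : (n+1) % 2^i = 0 <;> cases hb : n.testBit i
    · have hns : ¬ (n+1) % 2^(i+1) = 0 := by
        rw [mod_pow_succ]; simp [hb]
      simp only [Tst, if_pos h, if_neg hns]
      cases hb9 : n.testBit (i+1) <;> rfl
    · have hs : (n+1) % 2^(i+1) = 0 := (mod_pow_succ n i).mpr ⟨h, hb⟩
      simp only [Tst, if_pos h, if_pos hs]
      cases hb9 : n.testBit (i+1) <;> rfl
    · have hns : ¬ (n+1) % 2^(i+1) = 0 := by
        rw [mod_pow_succ]; simp [h]
      simp only [Tst, if_neg h, if_neg hns]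
      cases hb9 : n.testBit (i+1) <;> rfl
    · have hns : ¬ (n+1) % 2^(i+1) = 0 := by
        rw [mod_pow_succ]; simp [h]
      simp only [Tst, if_neg h, if_neg hns]
      cases hb9 : n.testBit (i+1) <;> rfl

private lemma actB (n : ℕ) : M.act .b (Yd n) = Wd (n+1) := by
  funext m
  have hm : m = 3*(m/3) + m % 3 := by omega
  rcases (by omega : m % 3 = 0 ∨ m % 3 = 1 ∨ m % 3 = 2) with h | h | h
  · have hm0 : m = 3*(m/3) := by omega
    rw [hm0]
    show M.τ (M.stateAt .b (Yd n) (3*(m/3))) (Yd n (3*(m/3))) = Wd (n+1) (3*(m/3))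
    rw [bState, Yd0 n (m/3)]
    have : Wd (n+1) (3*(m/3)) = true := by simp [Wd, Nat.mul_mod_right]
    rw [this]
    unfold Tst; split <;> rfl
  · rw [hm, h]
    show M.τ (M.δ (M.stateAt .b (Yd n) (3*(m/3))) (Yd n (3*(m/3)))) (Yd n (3*(m/3)+1))
        = Wd (n+1) (3*(m/3)+1)
    rw [bState, Yd0, Yd1]
    set i := m / 3
    have hW : Wd (n+1) (3*i+1) = !((n+1).testBit i) := by
      have h1 : (3*i+1) % 3 = 1 := by omega
      have h2 : (3*i+1) / 3 = i := by omega
      simp [Wd, h1, h2]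
    rw [hW, testBit_succ_eq]
    by_cases hc : (n+1) % 2^i = 0 <;>
      simp only [Tst, if_pos, if_neg, hc, if_true, if_false, ite_true, ite_false] <;>
      cases hb : n.testBit i <;> rfl
  · rw [hm, h]
    show M.τ (M.δ (M.δ (M.stateAt .b (Yd n) (3*(m/3))) (Yd n (3*(m/3)))) (Yd n (3*(m/3)+1)))
        (Yd n (3*(m/3)+1+1)) = Wd (n+1) (3*(m/3)+2)
    have h4 : 3*(m/3)+1+1 = 3*(m/3)+2 := by ring
    rw [bState, Yd0, Yd1, h4, Yd2]
    set i := m / 3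
    have hW : Wd (n+1) (3*i+2) = !((n+1).testBit (i+1)) := by
      have h1 : (3*i+2) % 3 = 2 := by omega
      have h2 : (3*i+2) / 3 = i := by omega
      simp [Wd, h1, h2]
    rw [hW, testBit_succ_eq]
    by_cases hc : (n+1) % 2^i = 0 <;> cases hb : n.testBit i
    · have hns : ¬ (n+1) % 2^(i+1) = 0 := by rw [mod_pow_succ]; simp [hb]
      simp only [Tst, hc, if_true, ite_true, if_neg hns]
      cases hb9 : n.testBit (i+1) <;> rfl
    · have hs : (n+1) % 2^(i+1) = 0 := (mod_pow_succ n i).mpr ⟨hc, hb⟩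
      simp only [Tst, hc, if_true, ite_true, if_pos hs]
      cases hb9 : n.testBit (i+1) <;> rfl
    · have hns : ¬ (n+1) % 2^(i+1) = 0 := by rw [mod_pow_succ]; simp [hc]
      simp only [Tst, hc, if_false, ite_false, if_neg hns]
      cases hb9 : n.testBit (i+1) <;> rfl
    · have hns : ¬ (n+1) % 2^(i+1) = 0 := by rw [mod_pow_succ]; simp [hc]
      simp only [Tst, hc, if_false, ite_false, if_neg hns]
      cases hb9 : n.testBit (i+1) <;> rfl

private lemma bc_W (n : ℕ) : (b * c) (Wd n) = Wd (n+1) := by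
  show b (c (Wd n)) = Wd (n+1)
  have hc : c (Wd n) = Yd n := actC n
  rw [hc]
  exact actB n

private lemma bc_pow_W (n : ℕ) : ((b * c) ^ n) (Wd 0) = Wd n := by
  induction n with
  | zero => rfl
  | succ n ih =>
    rw [pow_succ']
    show (b * c) (((b * c) ^ n) (Wd 0)) = Wd (n+1)
    rw [ih, bc_W]

private lemma bc_pow_ne_one (n : ℕ) (hn : 1 ≤ n) : (b * c) ^ n ≠ 1 := by
  intro h
  have hW : Wd n = Wd 0 := by
    have := bc_pow_W n
    rw [h] at this
    simpa using this.symm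
  obtain ⟨i, hi, -⟩ := Nat.exists_most_significant_bit (by omega : n ≠ 0)
  have h1 : (3*i+1) % 3 = 1 := by omega
  have h2 : (3*i+1) / 3 = i := by omega
  have := congrFun hW (3*i+1)
  simp [Wd, h1, h2, hi] at this

private lemma cat00_val0 (w : ℕ → Bool) : cat [false, false] w 0 = false := rfl
private lemma cat00_val1 (w : ℕ → Bool) : cat [false, false] w 1 = false := rfl
private lemma cat00_val2 (w : ℕ → Bool) (m : ℕ) : cat [false, false] w (m+2) = w m := by
  show List.getD [false, false] (m+2) (w (m+2-2)) = w m
  simp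

private lemma stateAt00 (q : St) (h : M.δ (M.δ q false) false = q) (w : ℕ → Bool) :
    ∀ m, M.stateAt q (cat [false, false] w) (m+2) = M.stateAt q w m := by
  intro m
  induction m with
  | zero =>
    show M.δ (M.δ q (cat [false, false] w 0)) (cat [false, false] w 1) = q
    rw [cat00_val0, cat00_val1]; exact h
  | succ m ih =>
    show M.δ (M.stateAt q (cat [false, false] w) (m+2)) (cat [false, false] w (m+2))
        = M.δ (M.stateAt q w m) (w m)
    rw [ih, cat00_val2]

private lemma act00 (q : St) (hq : q = St.b ∨ q = St.c) (w : ℕ → Bool) :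
    M.act q (cat [false, false] w) = cat [false, false] (M.act q w) := by
  have h : M.δ (M.δ q false) false = q := by rcases hq with h | h <;> subst h <;> rfl
  funext m
  match m with
  | 0 =>
    show M.τ q (cat [false, false] w 0) = cat [false, false] (M.act q w) 0
    rcases hq with h' | h' <;> subst h' <;> rfl
  | 1 =>
    show M.τ (M.δ q (cat [false, false] w 0)) (cat [false, false] w 1)
        = cat [false, false] (M.act q w) 1
    rcases hq with h' | h' <;> subst h' <;> rfl
  | (m+2) =>
    show M.τ (M.stateAt q (cat [false, false] w) (m+2)) (cat [false, false] w (m+2))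
        = cat [false, false] (M.act q w) (m+2)
    rw [stateAt00 q h w m, cat00_val2, cat00_val2]
    rfl

private lemma bc_cat00 (w : ℕ → Bool) :
    (b * c) (cat [false, false] w) = cat [false, false] ((b * c) w) := by
  show b (c (cat [false, false] w)) = cat [false, false] (b (c w))
  have hc : c (cat [false, false] w) = cat [false, false] (c w) :=
    act00 .c (Or.inr rfl) w
  rw [hc]
  exact act00 .b (Or.inl rfl) (c w)

private lemma bc_pow_cat00 (n : ℕ) (w : ℕ → Bool) :
    ((b * c) ^ n) (cat [false, false] w) = cat [false, false] (((b * c) ^ n) w) := by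
  induction n with
  | zero => rfl
  | succ n ih =>
    rw [pow_succ']
    show (b * c) (((b * c) ^ n) (cat [false, false] w))
        = cat [false, false] ((b * c) (((b * c) ^ n) w))
    rw [ih, bc_cat00]

private lemma cat_cons2 (u : List Bool) (w : ℕ → Bool) :
    cat (false :: false :: u) w = cat [false, false] (cat u w) := by
  funext m
  match m with
  | 0 => rfl
  | 1 => rfl
  | (m+2) =>
    show List.getD (false :: false :: u) (m+2) (w (m+2 - (u.length+2)))
        = cat [false, false] (cat u w) (m+2)
    rw [cat00_val2]
    show List.getD (false :: false :: u) (m+2) (w (m+2 - (u.length+2)))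
        = List.getD u m (w (m - u.length))
    have harith : m+2 - (u.length+2) = m - u.length := by omega
    rw [harith]
    simp [List.getD]

private lemma bc_pow_catrep (n j : ℕ) (w : ℕ → Bool) :
    ((b * c) ^ n) (cat (List.replicate (2*j) false) w)
      = cat (List.replicate (2*j) false) (((b * c) ^ n) w) := by
  induction j generalizing w with
  | zero =>
    have h0 : cat (List.replicate 0 false) = fun v => v := by
      funext v m; simp [cat]
    simp only [Nat.mul_zero, h0]
  | succ j ih =>
    have hrep : List.replicate (2*(j+1)) false
        = false :: false :: List.replicate (2*j) false := by
      have : 2*(j+1) = (2*j) + 1 + 1 := by ring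
      rw [this, List.replicate_succ, List.replicate_succ]
    rw [hrep, cat_cons2, bc_pow_cat00, ih, ← cat_cons2]

private lemma cat_right (u : List Bool) (v : ℕ → Bool) (m : ℕ) :
    cat u v (m + u.length) = v m := by
  show List.getD u (m + u.length) (v (m + u.length - u.length)) = v m
  rw [List.getD_eq_default u _ (by omega)]
  congr 1
  omega

private lemma resW_bc_pow (n j : ℕ) :
    resW ⇑((b * c) ^ n) (List.replicate (2*j) false) = ⇑((b * c) ^ n) := by
  funext w m
  show ((b * c) ^ n) (cat (List.replicate (2*j) false) w)
      (m + (List.replicate (2*j) false).length) = ((b * c) ^ n) w m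
  rw [bc_pow_catrep]
  exact cat_right _ _ m

/-- The automaton group of automaton 887 is non-contracting: `bc(00) = 00`,
`(bc)|₀₀ = bc`, and `bc` has infinite order. -/
theorem automaton887_noncontracting :
    (∀ w : ℕ → Bool, (b * c) (cat [false, false] w) = cat [false, false] ((b * c) w)) ∧
    (∀ n : ℕ, 1 ≤ n → (b * c) ^ n ≠ 1) ∧
    ¬ ∃ N : Finset (Equiv.Perm (ℕ → Bool)),
      ∀ g ∈ Subgroup.closure ({a, b, c} : Set (Equiv.Perm (ℕ → Bool))),
        ∃ k : ℕ, ∀ u : List Bool, k ≤ u.length → ∃ m ∈ N, resW ⇑g u = ⇑m := by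
  have hb : b ∈ Subgroup.closure ({a, b, c} : Set (Equiv.Perm (ℕ → Bool))) :=
    Subgroup.subset_closure (by simp)
  have hc : c ∈ Subgroup.closure ({a, b, c} : Set (Equiv.Perm (ℕ → Bool))) :=
    Subgroup.subset_closure (by simp)
  refine ⟨bc_cat00, bc_pow_ne_one, ?_⟩
  rintro ⟨N, hN⟩
  have key : ∀ n : ℕ, (b * c) ^ n ∈ N := by
    intro n
    obtain ⟨k, hk⟩ := hN ((b * c) ^ n) (pow_mem (mul_mem hb hc) n)
    obtain ⟨m, hmN, hm⟩ := hk (List.replicate (2*k) false)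
      (by simp [List.length_replicate]; omega)
    rw [resW_bc_pow] at hm
    rwa [Equiv.coe_fn_injective hm]
  obtain ⟨n, m, hne, heq⟩ := Finite.exists_ne_map_eq_of_infinite
    (fun n : ℕ => (⟨(b * c) ^ n, key n⟩ : {x // x ∈ N}))
  simp only [Subtype.mk.injEq] at heq
  rcases Nat.lt_or_ge n m with hlt | hge
  · have h1 : (b * c) ^ (m - n) * (b * c) ^ n = (b * c) ^ m := by
      rw [← pow_add]; congr 1; omega
    rw [← heq] at h1
    have h2 : (b * c) ^ (m - n) = 1 := by
      have := mul_right_cancel (b := (b * c) ^ n) (a := (b * c) ^ (m - n)) (c := 1)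
      apply this; rw [one_mul]; exact h1
    exact bc_pow_ne_one (m - n) (by omega) h2
  · have hlt : m < n := by omega
    have h1 : (b * c) ^ (n - m) * (b * c) ^ m = (b * c) ^ n := by
      rw [← pow_add]; congr 1; omega
    rw [heq] at h1
    have h2 : (b * c) ^ (n - m) = 1 := by
      have := mul_right_cancel (b := (b * c) ^ m) (a := (b * c) ^ (n - m)) (c := 1)
      apply this; rw [one_mul]; exact h1
    exact bc_pow_ne_one (n - m) (by omega) h2


end Stmt14
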